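/- Let λ > 0 with θ_λ ∈ (0, π/2) defined by tan θ_λ = 1/λ, let γ_λ ∈ (0, θ_λ), and let μ_L : (γ_λ, θ_λ) → [0, ∞) be differentiable with μ_L ≥ 0 and μ_L' ≥ 0, and with M_1 := sup_{(γ_λ,θ_λ)} μ_L' < ∞ and M_0 := sup_{(γ_λ,θ_λ)} μ_L < ∞. Then for every φ ∈ (γ_λ, θ_λ), the derivative of f̃ satisfies −sin θ_λ · M_1 · h(γ_λ) ≤ f̃'(φ) ≤ sin θ_λ · M_0 · |h'(γ_λ)|. -/

import Mathlib

open Real Set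

/-- The function `h(x) = (λ cot x + 1)/sin x`. -/
noncomputable def hBEM (lam x : ℝ) : ℝ :=
  (lam * (Real.cos x / Real.sin x) + 1) / Real.sin x

/-- The fixed-point map of the usual BEM algorithm for the simplified model:
`f̃(x) = π/2 − arctan(λ + μ_L(x) h(x))`. -/
noncomputable def fBEM (lam : ℝ) (μL : ℝ → ℝ) (x : ℝ) : ℝ :=
  Real.pi / 2 - Real.arctan (lam + μL x * hBEM lam x)

noncomputable def H1 (lam x : ℝ) : ℝ :=
  -(lam * (1 + Real.cos x ^ 2) + Real.sin x * Real.cos x) / Real.sin x ^ 3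

noncomputable def H2 (lam x : ℝ) : ℝ :=
  (2*lam*Real.sin x^2*Real.cos x + 3*lam*Real.cos x*(1+Real.cos x^2)
    + 2*Real.sin x*Real.cos x^2 + Real.sin x^3) / Real.sin x ^ 4

lemma hBEM_deriv (lam : ℝ) {x : ℝ} (hs : Real.sin x ≠ 0) :
    HasDerivAt (hBEM lam) (H1 lam x) x := by
  have hcot : HasDerivAt (fun x => Real.cos x / Real.sin x)
      ((-Real.sin x * Real.sin x - Real.cos x * Real.cos x) / Real.sin x ^ 2) x :=
    (Real.hasDerivAt_cos x).div (Real.hasDerivAt_sin x) hs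
  have h1 := ((hcot.const_mul lam).add_const 1).div (Real.hasDerivAt_sin x) hs
  refine h1.congr_deriv ?_
  symm
  have hpy := Real.sin_sq_add_cos_sq x
  unfold H1
  field_simp
  ring_nf
  linear_combination lam * hpy

lemma H1_deriv (lam : ℝ) {x : ℝ} (hs : Real.sin x ≠ 0) :
    HasDerivAt (H1 lam) (H2 lam x) x := by
  have hc := Real.hasDerivAt_cos x
  have hsn := Real.hasDerivAt_sin x
  have hden : HasDerivAt (fun x => Real.sin x ^ 3) (3 * Real.sin x ^ 2 * Real.cos x) x := by
    exact (hsn.pow 3).congr_deriv (by norm_num)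
  have h1 := (((((hc.pow 2).const_add 1).const_mul lam).add (hsn.mul hc)).neg).div hden
    (by positivity)
  refine h1.congr_deriv ?_
  symm
  have hpy := Real.sin_sq_add_cos_sq x
  unfold H2
  simp only [Pi.neg_apply, Pi.add_apply, Pi.mul_apply, Pi.pow_apply]
  field_simp
  ring_nf

set_option maxHeartbeats 1000000

/-- Bounds on the derivative of the usual BEM fixed-point map:
`−sin θ_λ · M₁ · h(γ_λ) ≤ f̃'(φ) ≤ sin θ_λ · M₀ · |h'(γ_λ)|` on `(γ_λ, θ_λ)`, where
`M₁ = sup μ_L'` and `M₀ = sup μ_L` on `(γ_λ, θ_λ)`. -/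
theorem bem_usual_iteration_derivative_bounds
    (lam θ γ : ℝ) (hlam : 0 < lam) (hθ : θ ∈ Ioo 0 (π / 2))
    (htan : Real.tan θ = 1 / lam) (hγ : γ ∈ Ioo 0 θ)
    (μL μL' : ℝ → ℝ)
    (hμLd : ∀ x ∈ Ioo γ θ, HasDerivAt μL (μL' x) x)
    (hμLnn : ∀ x ∈ Ioo γ θ, 0 ≤ μL x)
    (hμL'nn : ∀ x ∈ Ioo γ θ, 0 ≤ μL' x)
    (M₁ M₀ : ℝ)
    (hM₁ : IsLUB (μL' '' Ioo γ θ) M₁)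
    (hM₀ : IsLUB (μL '' Ioo γ θ) M₀) :
    ∀ φ ∈ Ioo γ θ,
      -(Real.sin θ * M₁ * hBEM lam γ) ≤ deriv (fBEM lam μL) φ ∧
      deriv (fBEM lam μL) φ ≤ Real.sin θ * M₀ * |deriv (hBEM lam) γ| := by
  obtain ⟨hθ0, hθπ⟩ := hθ
  obtain ⟨hγ0, hγθ⟩ := hγ
  have hsub : Icc γ θ ⊆ Ioo 0 (π / 2) := fun x hx =>
    ⟨lt_of_lt_of_le hγ0 hx.1, lt_of_le_of_lt hx.2 hθπ⟩
  have hsc : ∀ x ∈ Ioo (0:ℝ) (π/2), 0 < Real.sin x ∧ 0 < Real.cos x := fun x hx =>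
    ⟨Real.sin_pos_of_pos_of_lt_pi hx.1 (hx.2.trans_le (by linarith [Real.pi_pos])),
     Real.cos_pos_of_mem_Ioo ⟨by linarith [hx.1, Real.pi_pos], hx.2⟩⟩
  -- sin θ facts
  have hθmem : θ ∈ Ioo (0:ℝ) (π/2) := ⟨hθ0, hθπ⟩
  obtain ⟨hsθ, hcθ⟩ := hsc θ hθmem
  have hlsθ : lam * Real.sin θ = Real.cos θ := by
    rw [Real.tan_eq_sin_div_cos] at htan
    field_simp at htan
    linarith
  have hsin_sq : Real.sin θ ^ 2 * (1 + lam ^ 2) = 1 := by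
    nlinarith [Real.sin_sq_add_cos_sq θ]
  have hsθ1 : Real.sin θ ≤ 1 := Real.sin_le_one θ
  -- positivity / sign facts on (0, π/2)
  have hpos : ∀ x ∈ Ioo (0:ℝ) (π/2), 0 < hBEM lam x := by
    intro x hx
    obtain ⟨hs, hc⟩ := hsc x hx
    unfold hBEM
    positivity
  have hH1neg : ∀ x ∈ Ioo (0:ℝ) (π/2), H1 lam x < 0 := by
    intro x hx
    obtain ⟨hs, hc⟩ := hsc x hx
    unfold H1
    rw [div_neg_iff]
    right
    constructor
    · nlinarith
    · positivity
  have hH2nn : ∀ x ∈ Ioo (0:ℝ) (π/2), 0 ≤ H2 lam x := by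
    intro x hx
    obtain ⟨hs, hc⟩ := hsc x hx
    unfold H2
    positivity
  -- monotonicity of hBEM and H1 on Icc γ θ
  have hγθle : γ ≤ θ := hγθ.le
  have hint : interior (Icc γ θ) = Ioo γ θ := interior_Icc
  have hIooIcc : Ioo γ θ ⊆ Icc γ θ := Ioo_subset_Icc_self
  have hmono_h : AntitoneOn (hBEM lam) (Icc γ θ) := by
    apply antitoneOn_of_deriv_nonpos (convex_Icc γ θ)
    · intro x hx
      exact ((hBEM_deriv lam (hsc x (hsub hx)).1.ne').continuousAt).continuousWithinAt
    · intro x hx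
      rw [hint] at hx
      exact ((hBEM_deriv lam (hsc x (hsub (hIooIcc hx))).1.ne').differentiableAt).differentiableWithinAt
    · intro x hx
      rw [hint] at hx
      rw [(hBEM_deriv lam (hsc x (hsub (hIooIcc hx))).1.ne').deriv]
      exact (hH1neg x (hsub (hIooIcc hx))).le
  have hmono_H1 : MonotoneOn (H1 lam) (Icc γ θ) := by
    apply monotoneOn_of_deriv_nonneg (convex_Icc γ θ)
    · intro x hx
      exact ((H1_deriv lam (hsc x (hsub hx)).1.ne').continuousAt).continuousWithinAt
    · intro x hx
      rw [hint] at hx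
      exact ((H1_deriv lam (hsc x (hsub (hIooIcc hx))).1.ne').differentiableAt).differentiableWithinAt
    · intro x hx
      rw [hint] at hx
      rw [(H1_deriv lam (hsc x (hsub (hIooIcc hx))).1.ne').deriv]
      exact hH2nn x (hsub (hIooIcc hx))
  intro φ hφ
  obtain ⟨hγφ, hφθ⟩ := hφ
  have hφI : φ ∈ Ioo γ θ := ⟨hγφ, hφθ⟩
  have hφIcc : φ ∈ Icc γ θ := ⟨hγφ.le, hφθ.le⟩
  have hγIcc : γ ∈ Icc γ θ := ⟨le_refl γ, hγθle⟩
  have hφmem : φ ∈ Ioo (0:ℝ) (π/2) := hsub hφIcc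
  have hγmem : γ ∈ Ioo (0:ℝ) (π/2) := hsub hγIcc
  obtain ⟨hsφ, hcφ⟩ := hsc φ hφmem
  obtain ⟨hsγ, hcγ⟩ := hsc γ hγmem
  -- derivative of fBEM at φ
  have hh := hBEM_deriv lam hsφ.ne'
  have hg : HasDerivAt (fun x => lam + μL x * hBEM lam x)
      (μL' φ * hBEM lam φ + μL φ * H1 lam φ) φ := by
    simpa [mul_comm] using ((hμLd φ hφI).mul hh).const_add lam
  have hf : HasDerivAt (fBEM lam μL)
      (-(1 / (1 + (lam + μL φ * hBEM lam φ) ^ 2) *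
        (μL' φ * hBEM lam φ + μL φ * H1 lam φ))) φ := by
    have h2 := (Real.hasDerivAt_arctan (lam + μL φ * hBEM lam φ)).comp φ hg
    exact (h2.const_sub (π / 2)).congr_deriv (by simp)
  rw [hf.deriv]
  have hdγ : deriv (hBEM lam) γ = H1 lam γ := (hBEM_deriv lam hsγ.ne').deriv
  rw [hdγ]
  -- abbreviations and basic bounds
  set A := μL' φ * hBEM lam φ with hA
  set B := μL φ * H1 lam φ with hB
  set D := 1 + (lam + μL φ * hBEM lam φ) ^ 2 with hDdef
  have hhφpos := hpos φ hφmem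
  have hhγpos := hpos γ hγmem
  have hH1φ := hH1neg φ hφmem
  have hH1γ := hH1neg γ hγmem
  have hμφ := hμLnn φ hφI
  have hμ'φ := hμL'nn φ hφI
  have hAnn : 0 ≤ A := mul_nonneg hμ'φ hhφpos.le
  have hBnp : B ≤ 0 := mul_nonpos_of_nonneg_of_nonpos hμφ hH1φ.le
  have hM₁φ : μL' φ ≤ M₁ := hM₁.1 ⟨φ, hφI, rfl⟩
  have hM₀φ : μL φ ≤ M₀ := hM₀.1 ⟨φ, hφI, rfl⟩
  have hM₁nn : 0 ≤ M₁ := hμ'φ.trans hM₁φ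
  have hM₀nn : 0 ≤ M₀ := hμφ.trans hM₀φ
  have hhle : hBEM lam φ ≤ hBEM lam γ := hmono_h hγIcc hφIcc hγφ.le
  have hH1le : H1 lam γ ≤ H1 lam φ := hmono_H1 hγIcc hφIcc hγφ.le
  have hDpos : 0 < D := by positivity
  have hgge : lam ≤ lam + μL φ * hBEM lam φ := by nlinarith
  have hDge : 1 + lam ^ 2 ≤ D := by
    have h2 := pow_le_pow_left₀ hlam.le hgge 2
    rw [hDdef]; linarith
  have hinv : 1 / D ≤ Real.sin θ ^ 2 := by
    rw [div_le_iff₀ hDpos]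
    nlinarith [mul_le_mul_of_nonneg_left hDge (sq_nonneg (Real.sin θ))]
  have hinvnn : 0 ≤ 1 / D := by positivity
  have hss : Real.sin θ ^ 2 ≤ Real.sin θ := by nlinarith
  have hAle : A ≤ M₁ * hBEM lam γ :=
    mul_le_mul hM₁φ hhle hhφpos.le hM₁nn
  have hBle : -B ≤ M₀ * (-H1 lam γ) := by
    rw [hB, ← mul_neg]
    exact mul_le_mul hM₀φ (neg_le_neg hH1le) (neg_nonneg.mpr hH1φ.le) hM₀nn
  constructor
  · rw [neg_le_neg_iff]
    calc 1 / D * (A + B) ≤ 1 / D * A := by nlinarith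
      _ ≤ Real.sin θ ^ 2 * A := mul_le_mul_of_nonneg_right hinv hAnn
      _ ≤ Real.sin θ * A := mul_le_mul_of_nonneg_right hss hAnn
      _ ≤ Real.sin θ * (M₁ * hBEM lam γ) := mul_le_mul_of_nonneg_left hAle hsθ.le
      _ = Real.sin θ * M₁ * hBEM lam γ := by ring
  · rw [abs_of_neg hH1γ]
    calc -(1 / D * (A + B)) = 1 / D * (-B) + 1/D * (-A) := by ring
      _ ≤ 1 / D * (-B) := by nlinarith
      _ ≤ Real.sin θ ^ 2 * (-B) := mul_le_mul_of_nonneg_right hinv (by linarith)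
      _ ≤ Real.sin θ * (-B) := mul_le_mul_of_nonneg_right hss (by linarith)
      _ ≤ Real.sin θ * (M₀ * (-H1 lam γ)) := mul_le_mul_of_nonneg_left hBle hsθ.le
      _ = Real.sin θ * M₀ * (-H1 lam γ) := by ring
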